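/- Let G be a connected claw-free cubic graph that has a good decomposition with spanning tree T, and let C be a cycle of G that uses no edge of T. If C is not a triangle, then no vertex of C lies in a diamond of G, where a diamond of G means a set of four vertices of G inducing a subgraph isomorphic to K_4 minus an edge. -/

import Mathlib

open SimpleGraph

variable {V : Type*}

/-- A graph is claw-free if it has no induced subgraph isomorphic to `K_{1,3}`:
there are no four vertices `v, a, b, c` with `v` adjacent to the pairwise distinct,
pairwise non-adjacent vertices `a, b, c`. -/
def IsClawFree (G : SimpleGraph V) : Prop :=
  ¬ ∃ v a b c : V, G.Adj v a ∧ G.Adj v b ∧ G.Adj v c ∧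
    a ≠ b ∧ a ≠ c ∧ b ≠ c ∧ ¬ G.Adj a b ∧ ¬ G.Adj a c ∧ ¬ G.Adj b c

/-- A graph is cubic if every vertex has degree three. -/
def IsCubic (G : SimpleGraph V) : Prop :=
  ∀ v : V, (G.neighborSet v).ncard = 3

/-- A graph (viewed as an edge set) is a matching if every vertex has at most one neighbour. -/
def IsMatchingGraph (M : SimpleGraph V) : Prop :=
  ∀ ⦃v w w' : V⦄, M.Adj v w → M.Adj v w' → w = w'

/-- A (nonempty) 2-regular subgraph: it has at least one edge, and every vertex incident
with an edge has exactly two neighbours. -/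
def IsTwoRegularGraph (O : SimpleGraph V) : Prop :=
  O.edgeSet.Nonempty ∧ ∀ v ∈ O.support, (O.neighborSet v).ncard = 2

/-- A good decomposition of `G`: the edge set of `G` is partitioned into the edge set of a
spanning tree `T`, a matching `M` (possibly empty), and the edge set of a 2-regular
subgraph `O`. -/
def IsGoodDecomposition (G T M O : SimpleGraph V) : Prop :=
  T ≤ G ∧ M ≤ G ∧ O ≤ G ∧
  T.IsTree ∧ IsMatchingGraph M ∧ IsTwoRegularGraph O ∧
  T.edgeSet ∪ M.edgeSet ∪ O.edgeSet = G.edgeSet ∧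
  Disjoint T.edgeSet M.edgeSet ∧ Disjoint T.edgeSet O.edgeSet ∧
  Disjoint M.edgeSet O.edgeSet

/-- The set `s` induces a diamond (`K_4` minus one edge) in `G`. -/
def IsDiamondSet (G : SimpleGraph V) (s : Set V) : Prop :=
  ∃ a b c d : V, s = {a, b, c, d} ∧ a ≠ d ∧
    G.Adj a b ∧ G.Adj a c ∧ G.Adj b c ∧ G.Adj b d ∧ G.Adj c d ∧ ¬ G.Adj a d

/-- Lemma 2(ii): in a connected claw-free cubic graph with a good decomposition `{T, M, O}`,
no vertex of a non-triangle cycle avoiding the spanning tree `T` lies in a diamond of `G`. -/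


private lemma walk_closed {T : SimpleGraph V} {S : Set V}
    (hS : ∀ a ∈ S, ∀ b, T.Adj a b → b ∈ S) :
    ∀ {x y : V}, T.Walk x y → x ∈ S → y ∈ S := by
  intro x y p
  induction p with
  | nil => exact id
  | cons h q ih => intro hx; exact ih (hS _ hx _ h)

private lemma closed_contra {T : SimpleGraph V} (hT : T.Connected) {S : Set V}
    (hS : ∀ a ∈ S, ∀ b, T.Adj a b → b ∈ S) {x y : V} (hx : x ∈ S) (hy : y ∉ S) : False := by
  obtain ⟨p⟩ := hT x y
  exact hy (walk_closed hS p hx)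

private lemma isolated_contra {T : SimpleGraph V} (hT : T.Connected) {x y : V} (hxy : x ≠ y)
    (h : ∀ z, ¬ T.Adj x z) : False := by
  obtain ⟨p⟩ := hT x y
  cases p with
  | nil => exact hxy rfl
  | cons h' q => exact h _ h'

private lemma three_nbrs {G : SimpleGraph V} [Finite V] {v x y z : V}
    (h3 : (G.neighborSet v).ncard = 3) (hx : G.Adj v x) (hy : G.Adj v y) (hz : G.Adj v z)
    (hxy : x ≠ y) (hxz : x ≠ z) (hyz : y ≠ z) {w : V} (hw : G.Adj v w) :
    w = x ∨ w = y ∨ w = z := by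
  have hsub : ({x, y, z} : Set V) ⊆ G.neighborSet v := by
    intro t ht
    rcases ht with rfl | rfl | rfl <;> assumption
  have h3' : ({x, y, z} : Set V).ncard = 3 := Set.ncard_eq_three.mpr ⟨x, y, z, hxy, hxz, hyz, rfl⟩
  have heq : ({x, y, z} : Set V) = G.neighborSet v := by
    exact Set.eq_of_subset_of_ncard_le hsub (by rw [h3, h3']) (Set.toFinite _)
  have : w ∈ ({x, y, z} : Set V) := heq ▸ hw
  simpa using this

private lemma third_nbr {G : SimpleGraph V} [Finite V] {v x y : V}
    (h3 : (G.neighborSet v).ncard = 3) (hx : G.Adj v x) (hy : G.Adj v y) (hxy : x ≠ y) :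
    ∃ z, G.Adj v z ∧ z ≠ x ∧ z ≠ y := by
  by_contra h
  push_neg at h
  have hsub : G.neighborSet v ⊆ {x, y} := by
    intro t ht
    rcases eq_or_ne t x with rfl | htx
    · exact Set.mem_insert _ _
    · simp [h t ht htx]
  have := Set.ncard_le_ncard hsub (Set.toFinite _)
  rw [h3, Set.ncard_pair hxy] at this
  omega

private lemma second_nbr {O : SimpleGraph V} [Finite V] {v x : V}
    (h2 : (O.neighborSet v).ncard = 2) (hx : O.Adj v x) :
    ∃ y, O.Adj v y ∧ y ≠ x := by
  by_contra h
  push_neg at h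
  have hsub : O.neighborSet v ⊆ {x} := by
    intro t ht
    rcases eq_or_ne t x with rfl | htx
    · rfl
    · exact absurd (h t ht) (by simp [htx])
  have := Set.ncard_le_ncard hsub (Set.toFinite _)
  simp [h2, Set.ncard_singleton] at this

private lemma two_nbrs {O : SimpleGraph V} [Finite V] {v x y : V}
    (h2 : (O.neighborSet v).ncard = 2) (hx : O.Adj v x) (hy : O.Adj v y) (hxy : x ≠ y)
    {w : V} (hw : O.Adj v w) : w = x ∨ w = y := by
  have hsub : ({x, y} : Set V) ⊆ O.neighborSet v := by
    intro t ht; rcases ht with rfl | rfl <;> assumption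
  have heq : ({x, y} : Set V) = O.neighborSet v :=
    Set.eq_of_subset_of_ncard_le hsub (by rw [h2, Set.ncard_pair hxy]) (Set.toFinite _)
  have : w ∈ ({x, y} : Set V) := heq ▸ hw
  simpa using this

private lemma not_both {X Y : SimpleGraph V} (h : Disjoint X.edgeSet Y.edgeSet) {p q : V}
    (hx : X.Adj p q) (hy : Y.Adj p q) : False :=
  Set.disjoint_left.mp h (X.mem_edgeSet.mpr hx) (Y.mem_edgeSet.mpr hy)


private lemma cycle_two_edges {G : SimpleGraph V} {w : V} {p : G.Walk w w} (hp : p.IsCycle) :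
    ∃ x y : V, x ≠ y ∧ s(w, x) ∈ p.edges ∧ s(w, y) ∈ p.edges := by
  have h3 := hp.three_le_length
  have hlen : p.darts.length = p.length := p.length_darts
  have hd : p.darts ≠ [] := by
    intro h; rw [h] at hlen; simp at hlen; omega
  set d1 := p.darts.head hd with hd1
  set d2 := p.darts.getLast hd with hd2
  have hfst : d1.fst = w := by rw [hd1, Walk.head_darts_eq_firstDart]; rfl
  have hsnd : d2.snd = w := by rw [hd2, Walk.getLast_darts_eq_lastDart]; rfl
  have hm1 : d1 ∈ p.darts := List.head_mem hd
  have hm2 : d2 ∈ p.darts := List.getLast_mem hd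
  have e1 : d1.edge = s(w, d1.snd) := by rw [← hfst]; rfl
  have e2 : d2.edge = s(d2.fst, w) := by rw [← hsnd]; rfl
  have he1 : s(w, d1.snd) ∈ p.edges := e1 ▸ List.mem_map_of_mem hm1
  have he2 : s(w, d2.fst) ∈ p.edges := by
    have : d2.edge ∈ p.edges := List.mem_map_of_mem hm2
    rw [e2, Sym2.eq_swap] at this
    exact this
  refine ⟨d1.snd, d2.fst, ?_, he1, he2⟩
  intro heq
  have hnodup : p.edges.Nodup := hp.edges_nodup
  have hE : p.edges = p.darts.map Dart.edge := rfl
  have hne : p.edges ≠ [] := by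
    intro h
    have h' := p.length_edges
    rw [h] at h'; simp at h'; omega
  have hhead : p.edges.head hne = d1.edge := by
    rw [List.head_eq_getElem_zero hne, hd1, List.head_eq_getElem_zero hd]
    simp [hE]
  have hlast : p.edges.getLast hne = d2.edge := by
    rw [List.getLast_eq_getElem, hd2, List.getLast_eq_getElem]
    simp [hE]
  have hne2 : p.edges.head hne ≠ p.edges.getLast hne := by
    rw [List.head_eq_getElem_zero hne, List.getLast_eq_getElem]
    intro hcon
    have h01 := hnodup.getElem_inj_iff.mp hcon
    have h' := p.length_edges
    omega
  apply hne2
  rw [hhead, hlast, e1, e2, heq, Sym2.eq_swap]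

private lemma two_edges_at {G : SimpleGraph V} {v w : V} {c : G.Walk v v} (hc : c.IsCycle)
    (hw : w ∈ c.support) :
    ∃ x y : V, x ≠ y ∧ s(w, x) ∈ c.edges ∧ s(w, y) ∈ c.edges := by
  classical
  obtain ⟨x, y, hxy, h1, h2⟩ := cycle_two_edges (hc.rotate hw)
  exact ⟨x, y, hxy, (c.rotate_edges _ hw).perm.mem_iff.mp h1,
    (c.rotate_edges _ hw).perm.mem_iff.mp h2⟩


private lemma snd_inj {G : SimpleGraph V} {v : V} {p : G.Walk v v} (hp : p.IsCycle) :
    ∀ d1 ∈ p.darts, ∀ d2 ∈ p.darts, d1.snd = d2.snd → d1 = d2 := by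
  have h : (p.darts.map (fun d : G.Dart => d.snd)).Nodup := by
    rw [p.map_snd_darts]; exact hp.support_nodup
  exact fun d1 h1 d2 h2 he => List.inj_on_of_nodup_map h h1 h2 he

private lemma fst_inj {G : SimpleGraph V} {v : V} {p : G.Walk v v} (hp : p.IsCycle) :
    ∀ d1 ∈ p.darts, ∀ d2 ∈ p.darts, d1.fst = d2.fst → d1 = d2 := by
  have h3 := hp.three_le_length
  have hlen : p.support.length = p.length + 1 := p.length_support
  have htail : p.support.tail.Nodup := hp.support_nodup
  have htne : p.support.tail ≠ [] := by
    intro h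
    have hlt : p.support.tail.length = 0 := by rw [h]; rfl
    rw [List.length_tail, hlen] at hlt
    omega
  have hgl : p.support.tail.getLast htne = v := by
    rw [List.getLast_tail]; exact p.getLast_support
  have hvd : v ∉ p.support.tail.dropLast := by
    intro hv
    have hsplit := List.dropLast_append_getLast htne
    rw [← hsplit] at htail
    exact (List.disjoint_of_nodup_append htail) hv (by simp [hgl])
  have hnd : p.support.dropLast.Nodup := by
    have hds : p.support.dropLast = v :: p.support.tail.dropLast := by
      conv_lhs => rw [p.support_eq_cons]
      rw [List.dropLast_cons_of_ne_nil htne]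
    rw [hds, List.nodup_cons]
    exact ⟨hvd, htail.sublist (List.dropLast_sublist _)⟩
  have h : (p.darts.map (fun d : G.Dart => d.fst)).Nodup := by
    rw [p.map_fst_darts]; exact hnd
  exact fun d1 h1 d2 h2 he => List.inj_on_of_nodup_map h h1 h2 he

private lemma cycle_nbr {G : SimpleGraph V} {v a x y z : V} {p : G.Walk v v} (hp : p.IsCycle)
    (hxy : x ≠ y) (hx : s(a, x) ∈ p.edges) (hy : s(a, y) ∈ p.edges) (hz : s(a, z) ∈ p.edges) :
    z = x ∨ z = y := by
  by_contra hcon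
  push_neg at hcon
  obtain ⟨hzx, hzy⟩ := hcon
  obtain ⟨dx, hdx, hex⟩ := List.mem_map.mp hx
  obtain ⟨dy, hdy, hey⟩ := List.mem_map.mp hy
  obtain ⟨dz, hdz, hez⟩ := List.mem_map.mp hz
  have cx : (dx.fst = a ∧ dx.snd = x) ∨ (dx.fst = x ∧ dx.snd = a) := Sym2.eq_iff.mp hex
  have cy : (dy.fst = a ∧ dy.snd = y) ∨ (dy.fst = y ∧ dy.snd = a) := Sym2.eq_iff.mp hey
  have cz : (dz.fst = a ∧ dz.snd = z) ∨ (dz.fst = z ∧ dz.snd = a) := Sym2.eq_iff.mp hez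
  have pairP : ∀ {d e : G.Dart} {u1 u2 : V}, d ∈ p.darts → e ∈ p.darts →
      d.fst = a ∧ d.snd = u1 → e.fst = a ∧ e.snd = u2 → u1 = u2 := by
    intro d e u1 u2 hd he h1 h2
    have hde : d = e := fst_inj hp d hd e he (h1.1.trans h2.1.symm)
    rw [← h1.2, ← h2.2, hde]
  have pairQ : ∀ {d e : G.Dart} {u1 u2 : V}, d ∈ p.darts → e ∈ p.darts →
      d.fst = u1 ∧ d.snd = a → e.fst = u2 ∧ e.snd = a → u1 = u2 := by
    intro d e u1 u2 hd he h1 h2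
    have hde : d = e := snd_inj hp d hd e he (h1.2.trans h2.2.symm)
    rw [← h1.1, ← h2.1, hde]
  rcases cx with cx | cx <;> rcases cy with cy | cy <;> rcases cz with cz | cz
  · exact hxy (pairP hdx hdy cx cy)
  · exact hxy (pairP hdx hdy cx cy)
  · exact hzx (pairP hdz hdx cz cx)
  · exact hzy (pairQ hdz hdy cz cy)
  · exact hzy (pairP hdz hdy cz cy)
  · exact hzx (pairQ hdz hdx cz cx)
  · exact hxy (pairQ hdx hdy cx cy)
  · exact hxy (pairQ hdx hdy cx cy)

private lemma support_closed {G : SimpleGraph V} {S : Set V} {E : List (Sym2 V)}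
    (hcl : ∀ a ∈ S, ∀ b, s(a, b) ∈ E → b ∈ S) :
    ∀ {x y : V} (p : G.Walk x y), (∀ e ∈ p.edges, e ∈ E) → x ∈ S → ∀ z ∈ p.support, z ∈ S := by
  intro x y p
  induction p with
  | nil =>
    intro _ hx z hz
    rw [Walk.support_nil, List.mem_singleton] at hz
    exact hz ▸ hx
  | @cons u u' w h q ih =>
    intro hE hx z hz
    rw [Walk.support_cons] at hz
    rcases List.mem_cons.mp hz with rfl | hz'
    · exact hx
    · exact ih (fun e he => hE e (by simp [he])) (hcl _ hx _ (hE _ (by simp))) _ hz'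

private lemma cycle_length_three {G : SimpleGraph V} {v a b d : V} {p : G.Walk v v}
    (hp : p.IsCycle) (hab : a ≠ b) (had : a ≠ d) (hbd : b ≠ d)
    (h1 : s(a, b) ∈ p.edges) (h2 : s(b, d) ∈ p.edges) (h3 : s(d, a) ∈ p.edges) :
    p.length = 3 := by
  classical
  have ha : a ∈ p.support := p.fst_mem_support_of_mem_edges h1
  set q := p.rotate _ ha with hqdef
  have hq : q.IsCycle := hp.rotate ha
  have hmem : ∀ e : Sym2 V, e ∈ q.edges ↔ e ∈ p.edges :=
    fun e => (p.rotate_edges _ ha).perm.mem_iff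
  have hlen : q.length = p.length := by
    have hh := (p.rotate_edges _ ha).perm.length_eq
    rw [q.length_edges, p.length_edges] at hh
    exact hh
  have h1' : s(b, a) ∈ p.edges := by rw [Sym2.eq_swap]; exact h1
  have h2' : s(d, b) ∈ p.edges := by rw [Sym2.eq_swap]; exact h2
  have h3' : s(a, d) ∈ p.edges := by rw [Sym2.eq_swap]; exact h3
  have hcl : ∀ t ∈ ({a, b, d} : Set V), ∀ z, s(t, z) ∈ p.edges → z ∈ ({a, b, d} : Set V) := by
    intro t ht z hz
    rcases ht with rfl | rfl | rfl
    · rcases cycle_nbr hp hbd h1 h3' hz with rfl | rfl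
      · exact Or.inr (Or.inl rfl)
      · exact Or.inr (Or.inr rfl)
    · rcases cycle_nbr hp had h1' h2 hz with rfl | rfl
      · exact Or.inl rfl
      · exact Or.inr (Or.inr rfl)
    · rcases cycle_nbr hp hab.symm h2' h3 hz with rfl | rfl
      · exact Or.inr (Or.inl rfl)
      · exact Or.inl rfl
  have hsupp : ∀ z ∈ q.support, z ∈ ({a, b, d} : Set V) :=
    support_closed hcl q (fun e he => (hmem e).mp he) (Or.inl rfl)
  have hsub : q.edges.toFinset ⊆ ({s(a, b), s(b, d), s(d, a)} : Finset (Sym2 V)) := by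
    intro e he
    rw [List.mem_toFinset] at he
    revert he
    refine e.ind ?_
    intro x y he
    have hxS := hsupp x (q.fst_mem_support_of_mem_edges he)
    have hyS := hsupp y (q.snd_mem_support_of_mem_edges he)
    have hxy : x ≠ y := (q.adj_of_mem_edges he).ne
    simp only [Finset.mem_insert, Finset.mem_singleton]
    rcases hxS with rfl | rfl | rfl <;> rcases hyS with rfl | rfl | rfl
    · exact absurd rfl hxy
    · exact Or.inl rfl
    · exact Or.inr (Or.inr Sym2.eq_swap)
    · exact Or.inl Sym2.eq_swap
    · exact absurd rfl hxy
    · exact Or.inr (Or.inl rfl)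
    · exact Or.inr (Or.inr rfl)
    · exact Or.inr (Or.inl Sym2.eq_swap)
    · exact absurd rfl hxy
  have hcard : q.edges.toFinset.card = q.length := by
    rw [List.toFinset_card_of_nodup hq.edges_nodup, q.length_edges]
  have hcard3 : ({s(a, b), s(b, d), s(d, a)} : Finset (Sym2 V)).card ≤ 3 := by
    apply le_trans (Finset.card_insert_le _ _)
    have hc2 := Finset.card_insert_le s(b, d) ({s(d, a)} : Finset (Sym2 V))
    simp only [Finset.card_singleton] at hc2
    omega
  have hle := Finset.card_le_card hsub
  have h3l := hq.three_le_length
  omega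


private lemma case_tri {G T M O : SimpleGraph V} [Finite V] {v a b c₀ d a' d' : V}
    {p : G.Walk v v}
    (hp : p.IsCycle) (htri : p.length ≠ 3)
    (hTconn : T.Connected) (hMatch : IsMatchingGraph M)
    (hTle : T ≤ G) (hMle : M ≤ G) (hOle : O ≤ G)
    (hO2 : ∀ x y : V, O.Adj x y → (O.neighborSet x).ncard = 2)
    (hclass : ∀ x y : V, s(x, y) ∈ p.edges → M.Adj x y ∨ O.Adj x y)
    (hTM : ∀ x y : V, T.Adj x y → ¬ M.Adj x y)
    (hTO : ∀ x y : V, T.Adj x y → ¬ O.Adj x y)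
    (hMO : ∀ x y : V, M.Adj x y → ¬ O.Adj x y)
    (nab : a ≠ b) (nac : a ≠ c₀) (nad : a ≠ d) (nbc : b ≠ c₀) (nbd : b ≠ d) (ncd : c₀ ≠ d)
    (ha'a : a' ≠ a) (ha'b : a' ≠ b) (ha'c : a' ≠ c₀) (ha'd : a' ≠ d)
    (hd'b : d' ≠ b) (hd'c : d' ≠ c₀)
    (hNa : ∀ z, G.Adj a z → z = b ∨ z = c₀ ∨ z = a')
    (hNb : ∀ z, G.Adj b z → z = a ∨ z = c₀ ∨ z = d)
    (hNc : ∀ z, G.Adj c₀ z → z = a ∨ z = b ∨ z = d)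
    (hNd : ∀ z, G.Adj d z → z = b ∨ z = c₀ ∨ z = d')
    (h1 : s(b, a) ∈ p.edges) (h2 : s(b, c₀) ∈ p.edges) (hw2 : s(c₀, d) ∈ p.edges) : False := by
  rcases hclass b c₀ h2 with hbcM | hbcO
  · -- bc ∈ M
    have hbaO : O.Adj b a := by
      rcases hclass b a h1 with hbaM | h
      · exact absurd (hMatch hbaM hbcM) nac
      · exact h
    obtain ⟨t, htO, hta⟩ := second_nbr (hO2 b a hbaO) hbaO
    have htd : t = d := by
      rcases hNb t (hOle htO) with rfl | rfl | rfl
      · exact absurd rfl hta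
      · exact absurd htO (hMO _ _ hbcM)
      · rfl
    subst htd
    exact isolated_contra hTconn ha'b.symm (fun z hz => by
      rcases hNb z (hTle hz) with rfl | rfl | rfl
      · exact hTO _ _ hz hbaO
      · exact hTM _ _ hz hbcM
      · exact hTO _ _ hz htO)
  · -- hbcO : O.Adj b c₀
    rcases hclass b a h1 with hbaM | hbaO
    · obtain ⟨t, htO, htc⟩ := second_nbr (hO2 b c₀ hbcO) hbcO
      have htd : t = d := by
        rcases hNb t (hOle htO) with rfl | rfl | rfl
        · exact absurd htO (hMO _ _ hbaM)
        · exact absurd rfl htc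
        · rfl
      subst htd
      exact isolated_contra hTconn ha'b.symm (fun z hz => by
        rcases hNb z (hTle hz) with rfl | rfl | rfl
        · exact hTM _ _ hz hbaM
        · exact hTO _ _ hz hbcO
        · exact hTO _ _ hz htO)
    · -- hbaO : O.Adj b a
      have hbO : ∀ z, O.Adj b z → z = a ∨ z = c₀ :=
        fun z hz => two_nbrs (hO2 b a hbaO) hbaO hbcO nac hz
      rcases hclass c₀ d hw2 with hcdM | hcdO
      · obtain ⟨t, htO, htb⟩ := second_nbr (hO2 c₀ b hbcO.symm) hbcO.symm
        have hta : t = a := by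
          rcases hNc t (hOle htO) with rfl | rfl | rfl
          · rfl
          · exact absurd rfl htb
          · exact absurd htO (hMO _ _ hcdM)
        subst hta
        exact isolated_contra hTconn ha'c.symm (fun z hz => by
          rcases hNc z (hTle hz) with rfl | rfl | rfl
          · exact hTO _ _ hz htO
          · exact hTO _ _ hz hbcO.symm
          · exact hTM _ _ hz hcdM)
      · -- hcdO : O.Adj c₀ d
        have hcO : ∀ z, O.Adj c₀ z → z = b ∨ z = d :=
          fun z hz => two_nbrs (hO2 c₀ b hbcO.symm) hbcO.symm hcdO nbd hz
        obtain ⟨t, htO, htb⟩ := second_nbr (hO2 a b hbaO.symm) hbaO.symm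
        have hta' : t = a' := by
          rcases hNa t (hOle htO) with rfl | rfl | rfl
          · exact absurd rfl htb
          · rcases hcO a htO.symm with h | h
            · exact absurd h.symm nab.symm
            · exact absurd h nad
          · rfl
        have haaO : O.Adj a a' := hta' ▸ htO
        obtain ⟨r, hrO, hrc⟩ := second_nbr (hO2 d c₀ hcdO.symm) hcdO.symm
        have hrd' : r = d' := by
          rcases hNd r (hOle hrO) with rfl | rfl | rfl
          · rcases hbO d hrO.symm with h | h
            · exact absurd h.symm nad
            · exact absurd h.symm ncd
          · exact absurd rfl hrc
          · rfl
        have hddO : O.Adj d d' := hrd' ▸ hrO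
        refine closed_contra hTconn (S := ({a, b, c₀, d} : Set V)) ?_
          (show b ∈ ({a, b, c₀, d} : Set V) by simp) (show a' ∉ _ by simp [ha'a, ha'b, ha'c, ha'd])
        intro t ht z hz
        rcases ht with rfl | rfl | rfl | rfl
        · rcases hNa z (hTle hz) with rfl | rfl | rfl
          · simp
          · simp
          · exact (hTO _ _ hz haaO).elim
        · rcases hNb z (hTle hz) with rfl | rfl | rfl <;> simp
        · rcases hNc z (hTle hz) with rfl | rfl | rfl <;> simp
        · rcases hNd z (hTle hz) with rfl | rfl | rfl
          · simp
          · simp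
          · exact (hTO _ _ hz hddO).elim

private lemma case_ii {G T M O : SimpleGraph V} [Finite V] {v a b c₀ d a' d' : V}
    {p : G.Walk v v}
    (hp : p.IsCycle) (htri : p.length ≠ 3)
    (hTconn : T.Connected) (hMatch : IsMatchingGraph M)
    (hTle : T ≤ G) (hMle : M ≤ G) (hOle : O ≤ G)
    (hO2 : ∀ x y : V, O.Adj x y → (O.neighborSet x).ncard = 2)
    (hclass : ∀ x y : V, s(x, y) ∈ p.edges → M.Adj x y ∨ O.Adj x y)
    (hTM : ∀ x y : V, T.Adj x y → ¬ M.Adj x y)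
    (hTO : ∀ x y : V, T.Adj x y → ¬ O.Adj x y)
    (hMO : ∀ x y : V, M.Adj x y → ¬ O.Adj x y)
    (nab : a ≠ b) (nac : a ≠ c₀) (nad : a ≠ d) (nbc : b ≠ c₀) (nbd : b ≠ d) (ncd : c₀ ≠ d)
    (ha'a : a' ≠ a) (ha'b : a' ≠ b) (ha'c : a' ≠ c₀) (ha'd : a' ≠ d)
    (hd'b : d' ≠ b) (hd'c : d' ≠ c₀)
    (hNa : ∀ z, G.Adj a z → z = b ∨ z = c₀ ∨ z = a')
    (hNb : ∀ z, G.Adj b z → z = a ∨ z = c₀ ∨ z = d)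
    (hNc : ∀ z, G.Adj c₀ z → z = a ∨ z = b ∨ z = d)
    (hNd : ∀ z, G.Adj d z → z = b ∨ z = c₀ ∨ z = d')
    (h1 : s(b, a) ∈ p.edges) (h2 : s(b, c₀) ∈ p.edges) : False := by
  have hcsupp : c₀ ∈ p.support := p.snd_mem_support_of_mem_edges h2
  obtain ⟨x, y, hxy, hx, hy⟩ := two_edges_at hp hcsupp
  have hw : s(c₀, a) ∈ p.edges ∨ s(c₀, d) ∈ p.edges := by
    rcases hNc x (p.adj_of_mem_edges hx) with rfl | rfl | rfl
    · exact Or.inl hx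
    · rcases hNc y (p.adj_of_mem_edges hy) with rfl | rfl | rfl
      · exact Or.inl hy
      · exact absurd rfl hxy
      · exact Or.inr hy
    · exact Or.inr hx
  rcases hw with hwa | hw2
  · -- triangle a b c₀
    have h1' : s(a, b) ∈ p.edges := by rw [Sym2.eq_swap]; exact h1
    exact htri (cycle_length_three hp nab nac nbc h1' h2 hwa)
  · exact case_tri hp htri hTconn hMatch hTle hMle hOle hO2 hclass hTM hTO hMO
      nab nac nad nbc nbd ncd ha'a ha'b ha'c ha'd hd'b hd'c hNa hNb hNc hNd h1 h2 hw2

private lemma case_i {G T M O : SimpleGraph V} [Finite V] {v a b c₀ d a' d' : V}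
    {p : G.Walk v v}
    (hp : p.IsCycle) (htri : p.length ≠ 3)
    (hTconn : T.Connected) (hMatch : IsMatchingGraph M)
    (hTle : T ≤ G) (hMle : M ≤ G) (hOle : O ≤ G)
    (hO2 : ∀ x y : V, O.Adj x y → (O.neighborSet x).ncard = 2)
    (hclass : ∀ x y : V, s(x, y) ∈ p.edges → M.Adj x y ∨ O.Adj x y)
    (hTM : ∀ x y : V, T.Adj x y → ¬ M.Adj x y)
    (hTO : ∀ x y : V, T.Adj x y → ¬ O.Adj x y)
    (hMO : ∀ x y : V, M.Adj x y → ¬ O.Adj x y)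
    (nab : a ≠ b) (nac : a ≠ c₀) (nad : a ≠ d) (nbc : b ≠ c₀) (nbd : b ≠ d) (ncd : c₀ ≠ d)
    (ha'a : a' ≠ a) (ha'b : a' ≠ b) (ha'c : a' ≠ c₀) (ha'd : a' ≠ d)
    (hd'b : d' ≠ b) (hd'c : d' ≠ c₀)
    (hNa : ∀ z, G.Adj a z → z = b ∨ z = c₀ ∨ z = a')
    (hNb : ∀ z, G.Adj b z → z = a ∨ z = c₀ ∨ z = d)
    (hNc : ∀ z, G.Adj c₀ z → z = a ∨ z = b ∨ z = d)
    (hNd : ∀ z, G.Adj d z → z = b ∨ z = c₀ ∨ z = d')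
    (h1 : s(b, a) ∈ p.edges) (h2 : s(b, d) ∈ p.edges) : False := by
  rcases hclass b a h1 with hbaM | hbaO <;> rcases hclass b d h2 with hbdM | hbdO
  · exact nad (hMatch hbaM hbdM)
  · obtain ⟨t, htO, htd⟩ := second_nbr (hO2 b d hbdO) hbdO
    have htc : t = c₀ := by
      rcases hNb t (hOle htO) with rfl | rfl | rfl
      · exact absurd htO (hMO _ _ hbaM)
      · rfl
      · exact absurd rfl htd
    subst htc
    exact isolated_contra hTconn ha'b.symm (fun z hz => by
      rcases hNb z (hTle hz) with rfl | rfl | rfl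
      · exact hTM _ _ hz hbaM
      · exact hTO _ _ hz htO
      · exact hTO _ _ hz hbdO)
  · obtain ⟨t, htO, hta⟩ := second_nbr (hO2 b a hbaO) hbaO
    have htc : t = c₀ := by
      rcases hNb t (hOle htO) with rfl | rfl | rfl
      · exact absurd rfl hta
      · rfl
      · exact absurd htO (hMO _ _ hbdM)
    subst htc
    exact isolated_contra hTconn ha'b.symm (fun z hz => by
      rcases hNb z (hTle hz) with rfl | rfl | rfl
      · exact hTO _ _ hz hbaO
      · exact hTO _ _ hz htO
      · exact hTM _ _ hz hbdM)
  · -- both O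
    have hbO : ∀ z, O.Adj b z → z = a ∨ z = d :=
      fun z hz => two_nbrs (hO2 b a hbaO) hbaO hbdO nad hz
    obtain ⟨t, htO, htb⟩ := second_nbr (hO2 a b hbaO.symm) hbaO.symm
    have htca : t = c₀ ∨ t = a' := by
      rcases hNa t (hOle htO) with rfl | rfl | rfl
      · exact absurd rfl htb
      · exact Or.inl rfl
      · exact Or.inr rfl
    obtain ⟨r, hrO, hrb⟩ := second_nbr (hO2 d b hbdO.symm) hbdO.symm
    have hrcd : r = c₀ ∨ r = d' := by
      rcases hNd r (hOle hrO) with rfl | rfl | rfl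
      · exact absurd rfl hrb
      · exact Or.inl rfl
      · exact Or.inr rfl
    rcases htca with htc | hta'
    · have hacO : O.Adj a c₀ := htc ▸ htO
      rcases hrcd with hrc | hrd
      · have hdcO : O.Adj d c₀ := hrc ▸ hrO
        refine closed_contra hTconn (S := ({b, c₀} : Set V)) ?_
          (show b ∈ ({b, c₀} : Set V) by simp) (show a' ∉ _ by simp [ha'b, ha'c])
        intro t' ht' z hz
        rcases ht' with rfl | rfl
        · rcases hNb z (hTle hz) with rfl | rfl | rfl
          · exact (hTO _ _ hz hbaO).elim
          · simp
          · exact (hTO _ _ hz hbdO).elim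
        · rcases hNc z (hTle hz) with rfl | rfl | rfl
          · exact (hTO _ _ hz hacO.symm).elim
          · simp
          · exact (hTO _ _ hz hdcO.symm).elim
      · have hddO : O.Adj d d' := hrd ▸ hrO
        obtain ⟨q, hqO, hqa⟩ := second_nbr (hO2 c₀ a hacO.symm) hacO.symm
        have hqd : q = d := by
          rcases hNc q (hOle hqO) with rfl | rfl | rfl
          · exact absurd rfl hqa
          · rcases hbO c₀ hqO.symm with h | h
            · exact absurd h.symm nac
            · exact absurd h ncd
          · rfl
        have hdcO : O.Adj d c₀ := (hqd ▸ hqO : O.Adj c₀ d).symm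
        rcases two_nbrs (hO2 d b hbdO.symm) hbdO.symm hddO hd'b.symm hdcO with h | h
        · exact absurd h nbc.symm
        · exact absurd h hd'c.symm
    · have haaO : O.Adj a a' := hta' ▸ htO
      rcases hrcd with hrc | hrd
      · have hdcO : O.Adj d c₀ := hrc ▸ hrO
        obtain ⟨q, hqO, hqd⟩ := second_nbr (hO2 c₀ d hdcO.symm) hdcO.symm
        have hqa : q = a := by
          rcases hNc q (hOle hqO) with rfl | rfl | rfl
          · rfl
          · rcases hbO c₀ hqO.symm with h | h
            · exact absurd h.symm nac
            · exact absurd h ncd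
          · exact absurd rfl hqd
        have hacO : O.Adj a c₀ := (hqa ▸ hqO : O.Adj c₀ a).symm
        rcases two_nbrs (hO2 a b hbaO.symm) hbaO.symm haaO ha'b.symm hacO with h | h
        · exact absurd h nbc.symm
        · exact absurd h ha'c.symm
      · have hddO : O.Adj d d' := hrd ▸ hrO
        refine closed_contra hTconn (S := ({a, b, c₀, d} : Set V)) ?_
          (show b ∈ ({a, b, c₀, d} : Set V) by simp)
          (show a' ∉ _ by simp [ha'a, ha'b, ha'c, ha'd])
        intro t' ht' z hz
        rcases ht' with rfl | rfl | rfl | rfl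
        · rcases hNa z (hTle hz) with rfl | rfl | rfl
          · simp
          · simp
          · exact (hTO _ _ hz haaO).elim
        · rcases hNb z (hTle hz) with rfl | rfl | rfl <;> simp
        · rcases hNc z (hTle hz) with rfl | rfl | rfl <;> simp
        · rcases hNd z (hTle hz) with rfl | rfl | rfl
          · simp
          · simp
          · exact (hTO _ _ hz hddO).elim

theorem cycle_avoiding_tree_no_diamond_vertex [Fintype V] (G T M O : SimpleGraph V)
    (hconn : G.Connected) (hclaw : IsClawFree G) (hcubic : IsCubic G)
    (hgood : IsGoodDecomposition G T M O)
    {v : V} (c : G.Walk v v) (hc : c.IsCycle)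
    (hT : ∀ e ∈ c.edges, e ∉ T.edgeSet)
    (htri : c.length ≠ 3) :
    ∀ u ∈ c.support, ¬ ∃ s : Set V, IsDiamondSet G s ∧ u ∈ s := by
  classical
  obtain ⟨hTle, hMle, hOle, hTree, hMatch, hOreg, hunion, hTMdis, hTOdis, hMOdis⟩ := hgood
  have hTconn : T.Connected := hTree.isConnected
  have hO2 : ∀ x y : V, O.Adj x y → (O.neighborSet x).ncard = 2 :=
    fun x y h => hOreg.2 x ((SimpleGraph.mem_support O).mpr ⟨y, h⟩)
  have hclass : ∀ x y : V, s(x, y) ∈ c.edges → M.Adj x y ∨ O.Adj x y := by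
    intro x y h
    have hG : s(x, y) ∈ G.edgeSet := c.edges_subset_edgeSet h
    rw [← hunion] at hG
    rcases hG with (hT' | hM) | hO
    · exact absurd hT' (hT _ h)
    · exact Or.inl (M.mem_edgeSet.mp hM)
    · exact Or.inr (O.mem_edgeSet.mp hO)
  have hTM : ∀ x y : V, T.Adj x y → ¬ M.Adj x y := fun x y ht hm => not_both hTMdis ht hm
  have hTO : ∀ x y : V, T.Adj x y → ¬ O.Adj x y := fun x y ht hm => not_both hTOdis ht hm
  have hMO : ∀ x y : V, M.Adj x y → ¬ O.Adj x y := fun x y ht hm => not_both hMOdis ht hm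
  intro u hu
  rintro ⟨s, ⟨a, b, c₀, d, hs, nad, hab, hac, hbc, hbd, hcd, hnad⟩, hus⟩
  have nab : a ≠ b := hab.ne
  have nac : a ≠ c₀ := hac.ne
  have nbc : b ≠ c₀ := hbc.ne
  have nbd : b ≠ d := hbd.ne
  have ncd : c₀ ≠ d := hcd.ne
  have hNb : ∀ z, G.Adj b z → z = a ∨ z = c₀ ∨ z = d :=
    fun z hz => three_nbrs (hcubic b) hab.symm hbc hbd nac nad ncd hz
  have hNc : ∀ z, G.Adj c₀ z → z = a ∨ z = b ∨ z = d :=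
    fun z hz => three_nbrs (hcubic c₀) hac.symm hbc.symm hcd nab nad nbd hz
  obtain ⟨a', haa', ha'b, ha'c⟩ := third_nbr (hcubic a) hab hac nbc
  have ha'a : a' ≠ a := haa'.ne.symm
  have ha'd : a' ≠ d := fun h => hnad (h ▸ haa')
  have hNa : ∀ z, G.Adj a z → z = b ∨ z = c₀ ∨ z = a' :=
    fun z hz => three_nbrs (hcubic a) hab hac haa' nbc ha'b.symm ha'c.symm hz
  obtain ⟨d', hdd', hd'b, hd'c⟩ := third_nbr (hcubic d) hbd.symm hcd.symm nbc
  have hd'd : d' ≠ d := hdd'.ne.symm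
  have hd'a : d' ≠ a := fun h => hnad ((h ▸ hdd') : G.Adj d a).symm
  have hNd : ∀ z, G.Adj d z → z = b ∨ z = c₀ ∨ z = d' :=
    fun z hz => three_nbrs (hcubic d) hbd.symm hcd.symm hdd' nbc hd'b.symm hd'c.symm hz
  rw [hs] at hus
  -- an inner diamond vertex (b or c₀) lies on the cycle
  have hbcsupp : b ∈ c.support ∨ c₀ ∈ c.support := by
    rcases hus with rfl | rfl | rfl | rfl
    · obtain ⟨x, y, hxy, hx, hy⟩ := two_edges_at hc hu
      rcases hNa x (c.adj_of_mem_edges hx) with rfl | rfl | rfl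
      · exact Or.inl (c.snd_mem_support_of_mem_edges hx)
      · exact Or.inr (c.snd_mem_support_of_mem_edges hx)
      · rcases hNa y (c.adj_of_mem_edges hy) with rfl | rfl | rfl
        · exact Or.inl (c.snd_mem_support_of_mem_edges hy)
        · exact Or.inr (c.snd_mem_support_of_mem_edges hy)
        · exact absurd rfl hxy
    · exact Or.inl hu
    · exact Or.inr hu
    · obtain ⟨x, y, hxy, hx, hy⟩ := two_edges_at hc hu
      rcases hNd x (c.adj_of_mem_edges hx) with rfl | rfl | rfl
      · exact Or.inl (c.snd_mem_support_of_mem_edges hx)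
      · exact Or.inr (c.snd_mem_support_of_mem_edges hx)
      · rcases hNd y (c.adj_of_mem_edges hy) with rfl | rfl | rfl
        · exact Or.inl (c.snd_mem_support_of_mem_edges hy)
        · exact Or.inr (c.snd_mem_support_of_mem_edges hy)
        · exact absurd rfl hxy
  -- adapted classifiers for the (a ↔ d, a' ↔ d') swapped configuration
  have hNb' : ∀ z, G.Adj b z → z = d ∨ z = c₀ ∨ z = a := by
    intro z hz
    rcases hNb z hz with rfl | rfl | rfl
    · exact Or.inr (Or.inr rfl)
    · exact Or.inr (Or.inl rfl)
    · exact Or.inl rfl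
  have hNc' : ∀ z, G.Adj c₀ z → z = d ∨ z = b ∨ z = a := by
    intro z hz
    rcases hNc z hz with rfl | rfl | rfl
    · exact Or.inr (Or.inr rfl)
    · exact Or.inr (Or.inl rfl)
    · exact Or.inl rfl
  rcases hbcsupp with hbs | hcs
  · obtain ⟨x, y, hxy, hx, hy⟩ := two_edges_at hc hbs
    rcases hNb x (c.adj_of_mem_edges hx) with rfl | rfl | rfl <;>
      rcases hNb y (c.adj_of_mem_edges hy) with rfl | rfl | rfl
    · exact absurd rfl hxy
    · exact case_ii hc htri hTconn hMatch hTle hMle hOle hO2 hclass hTM hTO hMO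
        nab nac nad nbc nbd ncd ha'a ha'b ha'c ha'd hd'b hd'c hNa hNb hNc hNd hx hy
    · exact case_i hc htri hTconn hMatch hTle hMle hOle hO2 hclass hTM hTO hMO
        nab nac nad nbc nbd ncd ha'a ha'b ha'c ha'd hd'b hd'c hNa hNb hNc hNd hx hy
    · exact case_ii hc htri hTconn hMatch hTle hMle hOle hO2 hclass hTM hTO hMO
        nab nac nad nbc nbd ncd ha'a ha'b ha'c ha'd hd'b hd'c hNa hNb hNc hNd hy hx
    · exact absurd rfl hxy
    · exact case_ii hc htri hTconn hMatch hTle hMle hOle hO2 hclass hTM hTO hMO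
        nbd.symm ncd.symm nad.symm nbc nab.symm nac.symm hd'd hd'b hd'c hd'a ha'b ha'c
        hNd hNb' hNc' hNa hy hx
    · exact case_i hc htri hTconn hMatch hTle hMle hOle hO2 hclass hTM hTO hMO
        nab nac nad nbc nbd ncd ha'a ha'b ha'c ha'd hd'b hd'c hNa hNb hNc hNd hy hx
    · exact case_ii hc htri hTconn hMatch hTle hMle hOle hO2 hclass hTM hTO hMO
        nbd.symm ncd.symm nad.symm nbc nab.symm nac.symm hd'd hd'b hd'c hd'a ha'b ha'c
        hNd hNb' hNc' hNa hx hy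
    · exact absurd rfl hxy
  · -- c₀ on support : swap b ↔ c₀
    obtain ⟨x, y, hxy, hx, hy⟩ := two_edges_at hc hcs
    -- classifiers with b and c₀ swapped
    have hNaS : ∀ z, G.Adj a z → z = c₀ ∨ z = b ∨ z = a' := by
      intro z hz
      rcases hNa z hz with rfl | rfl | rfl
      · exact Or.inr (Or.inl rfl)
      · exact Or.inl rfl
      · exact Or.inr (Or.inr rfl)
    have hNdS : ∀ z, G.Adj d z → z = c₀ ∨ z = b ∨ z = d' := by
      intro z hz
      rcases hNd z hz with rfl | rfl | rfl
      · exact Or.inr (Or.inl rfl)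
      · exact Or.inl rfl
      · exact Or.inr (Or.inr rfl)
    have hNbS : ∀ z, G.Adj b z → z = d ∨ z = c₀ ∨ z = a := hNb'
    have hNcS : ∀ z, G.Adj c₀ z → z = d ∨ z = b ∨ z = a := hNc'
    rcases hNc x (c.adj_of_mem_edges hx) with rfl | rfl | rfl <;>
      rcases hNc y (c.adj_of_mem_edges hy) with rfl | rfl | rfl
    · exact absurd rfl hxy
    · -- edges s(c₀,a), s(c₀,b) : case_ii with b↔c₀ swap (diamond (a,c₀,b,d))
      exact case_ii hc htri hTconn hMatch hTle hMle hOle hO2 hclass hTM hTO hMO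
        nac nab nad nbc.symm ncd nbd ha'a ha'c ha'b ha'd hd'c hd'b
        hNaS hNc hNb hNdS hx hy
    · -- edges s(c₀,a), s(c₀,d) : case_i with b↔c₀ swap
      exact case_i hc htri hTconn hMatch hTle hMle hOle hO2 hclass hTM hTO hMO
        nac nab nad nbc.symm ncd nbd ha'a ha'c ha'b ha'd hd'c hd'b
        hNaS hNc hNb hNdS hx hy
    · exact case_ii hc htri hTconn hMatch hTle hMle hOle hO2 hclass hTM hTO hMO
        nac nab nad nbc.symm ncd nbd ha'a ha'c ha'b ha'd hd'c hd'b
        hNaS hNc hNb hNdS hy hx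
    · exact absurd rfl hxy
    · -- edges s(c₀,b), s(c₀,d) : swap b↔c₀ then a↔d : diamond (d,c₀,b,a), a'↦d'
      exact case_ii hc htri hTconn hMatch hTle hMle hOle hO2 hclass hTM hTO hMO
        ncd.symm nbd.symm nad.symm nbc.symm nac.symm nab.symm hd'd hd'c hd'b hd'a ha'c ha'b
        hNdS hNcS hNbS hNaS hy hx
    · exact case_i hc htri hTconn hMatch hTle hMle hOle hO2 hclass hTM hTO hMO
        nac nab nad nbc.symm ncd nbd ha'a ha'c ha'b ha'd hd'c hd'b
        hNaS hNc hNb hNdS hy hx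
    · exact case_ii hc htri hTconn hMatch hTle hMle hOle hO2 hclass hTM hTO hMO
        ncd.symm nbd.symm nad.symm nbc.symm nac.symm nab.symm hd'd hd'c hd'b hd'a ha'c ha'b
        hNdS hNcS hNbS hNaS hx hy
    · exact absurd rfl hxy
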